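/- Let A and B be finite posets, and let g : A → B and f : B → A be order-preserving maps forming a Galois connection g ⊣ f. Then the topological spaces X_A and X_B are homotopy equivalent; that is, there exist continuous maps φ : X_A → X_B and ψ : X_B → X_A with ψ ∘ φ homotopic to the identity of X_A and φ ∘ ψ homotopic to the identity of X_B. -/
import Mathlib

open Topology

/-- If two continuous maps into a lower-set-topology space are pointwise comparable
(`φ ≤ ψ`), they are homotopic, via the homotopy that equals `φ` for `t < 1` and `ψ` at `t = 1`. -/
lemma homotopic_of_le {X : Type*} [TopologicalSpace X] {B : Type*} [Preorder B]
    (φ ψ : C(X, WithLowerSet B)) (h : ∀ x, φ x ≤ ψ x) :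
    ContinuousMap.Homotopic φ ψ := by
  refine ⟨⟨⟨fun p => if p.1 = 1 then ψ p.2 else φ p.2, ?_⟩, ?_, ?_⟩⟩
  · rw [continuous_def]
    intro U hU
    have hU' : IsLowerSet U := (Topology.IsLowerSet.isOpen_iff_isLowerSet).mp hU
    have key : (fun p : unitInterval × X => if p.1 = 1 then ψ p.2 else φ p.2) ⁻¹' U
        = (({1}ᶜ : Set unitInterval) ×ˢ (φ ⁻¹' U)) ∪ ((Set.univ : Set unitInterval) ×ˢ (ψ ⁻¹' U)) := by
      ext ⟨t, x⟩
      by_cases ht : t = 1 <;> simp [ht]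
      intro hψ
      exact hU' (h x) hψ
    rw [key]
    exact (isOpen_compl_singleton.prod (φ.continuous.isOpen_preimage U hU)).union
      (isOpen_univ.prod (ψ.continuous.isOpen_preimage U hU))
  · intro x
    simp [(zero_ne_one : (0 : unitInterval) ≠ 1)]
  · intro x
    simp

theorem stmt6 {A B : Type*} [PartialOrder A] [Fintype A] [PartialOrder B] [Fintype B]
    (g : A → B) (f : B → A) (hg : Monotone g) (hf : Monotone f)
    (hgal : ∀ (a : A) (b : B), g a ≤ b ↔ a ≤ f b) :
    ∃ (φ : C(WithLowerSet A, WithLowerSet B)) (ψ : C(WithLowerSet B, WithLowerSet A)),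
      ContinuousMap.Homotopic (ψ.comp φ) (ContinuousMap.id (WithLowerSet A)) ∧
      ContinuousMap.Homotopic (φ.comp ψ) (ContinuousMap.id (WithLowerSet B)) := by
  refine ⟨WithLowerSet.map ⟨g, hg⟩, WithLowerSet.map ⟨f, hf⟩, ?_, ?_⟩
  · exact (homotopic_of_le (ContinuousMap.id _)
      ((WithLowerSet.map ⟨f, hf⟩).comp (WithLowerSet.map ⟨g, hg⟩))
      (fun a => (hgal a (g a)).mp le_rfl)).symm
  · exact homotopic_of_le ((WithLowerSet.map ⟨g, hg⟩).comp (WithLowerSet.map ⟨f, hf⟩))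
      (ContinuousMap.id _) (fun b => (hgal (f b) b).mpr le_rfl)
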